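/- Let G be a graph whose vertices are coloured with three colours (each colour used at least once, colouring not necessarily proper) such that, for each fixed pair of colours, deleting all edges with one endpoint of each of those two colours leaves G connected. If the total domination number of the complement graph satisfies γ̃(Ḡ) ≥ 5, then G contains a triangle whose three vertices receive the three distinct colours. -/

import Mathlib

open Finset

/-- The faces of an abstract simplicial complex: a set of nonempty finite sets of
vertices, closed under taking nonempty subsets. -/
def IsComplex {V : Type*} (S : Set (Finset V)) : Prop :=
  (∀ s ∈ S, s.Nonempty) ∧ ∀ s ∈ S, ∀ t ⊆ s, t.Nonempty → t ∈ S

/-- The nerve of a collection `Γ` of (sub)complexes, as a set of finsets of the index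
type: the simplices are the nonempty subcollections with a common face. -/
def nerveC {ι V : Type*} (Γ : ι → Set (Finset V)) : Set (Finset ι) :=
  {σ | σ.Nonempty ∧ (⋂ i ∈ (σ : Finset ι), Γ i).Nonempty}

/-- Simplicial `n`-chains (dimension `n`, i.e. on vertex sets of cardinality `n+1`)
on the vertex type `V`, with coefficients in `A`. -/
abbrev Chains (A V : Type*) [AddCommGroup A] [LinearOrder V] (n : ℕ) : Type _ :=
  {s : Finset V // s.card = n + 1} →₀ A

variable (R : Type*) [CommRing R] (A : Type*) [AddCommGroup A] [Module R A]
variable (V : Type*) [LinearOrder V]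

/-- The simplicial boundary map, with the usual alternating signs determined by the
linear order on the vertices. -/
noncomputable def bdry (n : ℕ) : Chains A V (n + 1) →ₗ[R] Chains A V n :=
  Finsupp.lsum R fun s =>
    ∑ v ∈ (s : Finset V).attach,
      ((-1 : ℤ) ^ (((s : Finset V).filter (fun w => w < v.1)).card)) •
        (Finsupp.lsingle (R := R) ⟨(s : Finset V).erase v.1, by
          rw [Finset.card_erase_of_mem v.2, s.2]; rfl⟩)

/-- The augmentation map on `0`-chains. -/
noncomputable def aug : Chains A V 0 →ₗ[R] A :=
  Finsupp.lsum R fun _ => LinearMap.id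

/-- Reduced cycles: kernel of the boundary map, resp. of the augmentation in degree 0. -/
noncomputable def cycles : (n : ℕ) → Submodule R (Chains A V n)
  | 0 => LinearMap.ker (aug R A V)
  | (n + 1) => LinearMap.ker (bdry R A V n)

/-- Chains supported on the simplices belonging to `S`. -/
def chainsIn (S : Set (Finset V)) (n : ℕ) : Submodule R (Chains A V n) :=
  Finsupp.supported A R {s : {s : Finset V // s.card = n + 1} | ↑s ∈ S}

/-- Reduced cycles of the complex `S`. -/
noncomputable def cyclesIn (S : Set (Finset V)) (n : ℕ) : Submodule R (Chains A V n) :=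
  cycles R A V n ⊓ chainsIn R A V S n

/-- Boundaries of chains of the complex `S`. -/
noncomputable def boundariesIn (S : Set (Finset V)) (n : ℕ) : Submodule R (Chains A V n) :=
  Submodule.map (bdry R A V n) (chainsIn R A V S (n + 1))

/-- Reduced simplicial homology of the complex `S` in degree `n ≥ 0`,
with coefficients in the `R`-module `A`. -/
noncomputable abbrev redH (S : Set (Finset V)) (n : ℕ) : Type _ :=
  (cyclesIn R A V S n) ⧸
    (Submodule.comap (cyclesIn R A V S n).subtype (boundariesIn R A V S n))

/-- Vanishing of the reduced homology of `S` in degree `n : ℤ`, with the convention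
that `H̃₋₁(S) = 0` iff `S` is nonempty (and trivial vanishing below degree `-1`). -/
def RedHVanish (S : Set (Finset V)) (n : ℤ) : Prop :=
  if n < -1 then True
  else if n = -1 then S.Nonempty
  else Subsingleton (redH R A V S n.toNat)

open scoped Classical in
/-- The dimension (rank) of the reduced homology of `S` in degree `n : ℤ`; in degree `-1`
it is `0` iff `S` is nonempty, in accordance with the convention. -/
noncomputable def redHRank (S : Set (Finset V)) (n : ℤ) : Cardinal :=
  if n < -1 then 0
  else if n = -1 then (if S.Nonempty then (0 : Cardinal) else 1)
  else Module.rank R (redH R A V S n.toNat)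



section RainbowAux

variable {α : Type*}

def rWtc (x y : Fin 3) : ZMod 2 := if (x = 0 ∧ y = 1) ∨ (x = 1 ∧ y = 0) then 1 else 0

def rWt (c : α → Fin 3) (u v : α) : ZMod 2 := rWtc (c u) (c v)

lemma rWtc_symm : ∀ x y, rWtc x y = rWtc y x := by decide
lemma rWtc_self : ∀ x, rWtc x x = 0 := by decide
lemma rWtc_tri : ∀ x y z : Fin 3, (x = y ∨ y = z ∨ x = z) →
    rWtc x y + rWtc y z + rWtc x z = 0 := by decide
lemma zmod2_add_self : ∀ x : ZMod 2, x + x = 0 := by decide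
lemma zmod2_two : (2 : ZMod 2) = 0 := by decide

def rlWt (c : α → Fin 3) : List α → ZMod 2
  | [] => 0
  | [_] => 0
  | a :: b :: l => rWt c a b + rlWt c (b :: l)

lemma rlWt_cons_cons (c : α → Fin 3) (a b : α) (l : List α) :
    rlWt c (a :: b :: l) = rWt c a b + rlWt c (b :: l) := rfl

variable (G : SimpleGraph α) (c : α → Fin 3)

lemma rWt_symm (u v : α) : rWt c u v = rWt c v u := rWtc_symm _ _

lemma rWt_tri (nr : ∀ u v w : α, G.Adj u v → G.Adj v w → G.Adj u w →
      (c u = c v ∨ c v = c w ∨ c u = c w))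
    {u v w : α} (h1 : u = v ∨ G.Adj u v) (h2 : v = w ∨ G.Adj v w)
    (h3 : u = w ∨ G.Adj u w) :
    rWt c u v + rWt c v w + rWt c u w = 0 := by
  rcases h1 with rfl | h1
  · simp only [rWt, rWtc_self, zero_add]; exact zmod2_add_self _
  rcases h2 with rfl | h2
  · simp only [rWt, rWtc_self]; rw [add_zero]; exact zmod2_add_self _
  rcases h3 with rfl | h3
  · simp only [rWt, rWtc_self, add_zero]; rw [rWtc_symm (c v) (c u)]
    exact zmod2_add_self _
  exact rWtc_tri _ _ _ (nr u v w h1 h2 h3)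

lemma closed_wt (nr : ∀ u v w : α, G.Adj u v → G.Adj v w → G.Adj u w →
      (c u = c v ∨ c v = c w ∨ c u = c w))
    (hz : ∀ a b d e : α, ∃ z, (a = z ∨ G.Adj a z) ∧ (b = z ∨ G.Adj b z) ∧
      (d = z ∨ G.Adj d z) ∧ (e = z ∨ G.Adj e z)) :
    ∀ (n : ℕ) (a : α) (l : List α), l.length ≤ n →
      List.Chain (fun x y => x = y ∨ G.Adj x y) a l →
      (a :: l).getLast? = some a → rlWt c (a :: l) = 0 := by
  intro n
  induction n with
  | zero =>
    intro a l hl _ _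
    have : l = [] := List.length_eq_zero_iff.mp (Nat.le_zero.mp hl)
    subst this; rfl
  | succ m ih =>
    intro a l hl hch hcl
    match l with
    | [] => rfl
    | [b] =>
      have hb : b = a := by simpa using hcl
      rw [rlWt_cons_cons, hb]
      simp only [rWt, rWtc_self, zero_add]
      rfl
    | [b, d] =>
      have hd : d = a := by simpa using hcl
      rw [rlWt_cons_cons, rlWt_cons_cons, hd]
      have h' : rlWt c [a] = 0 := rfl
      rw [h', add_zero]
      simp only [rWt]
      rw [rWtc_symm (c b) (c a)]
      exact zmod2_add_self _
    | b :: d :: e :: rest =>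
      unfold List.Chain at hch
      rw [List.chain_cons, List.chain_cons, List.chain_cons] at hch
      obtain ⟨hab, hbd, hde, hch⟩ := hch
      obtain ⟨z, hza, hzb, hzd, hze⟩ := hz a b d e
      have t1 := rWt_tri G c nr hab hzb hza
      have t2 := rWt_tri G c nr hbd hzd hzb
      have t3 := rWt_tri G c nr hde hze hzd
      have hlen : (z :: e :: rest).length ≤ m := by
        simp only [List.length_cons] at hl ⊢; omega
      have hch' : List.Chain (fun x y => x = y ∨ G.Adj x y) a (z :: e :: rest) := by
        unfold List.Chain
        rw [List.chain_cons, List.chain_cons]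
        exact ⟨hza, hze.imp Eq.symm G.adj_symm, hch⟩
      have hcl' : (a :: z :: e :: rest).getLast? = some a := by
        rw [List.getLast?_cons_cons, List.getLast?_cons_cons]
        rw [List.getLast?_cons_cons, List.getLast?_cons_cons,
          List.getLast?_cons_cons] at hcl
        exact hcl
      have ihres := ih a (z :: e :: rest) hlen hch' hcl'
      rw [rlWt_cons_cons, rlWt_cons_cons] at ihres
      rw [rlWt_cons_cons, rlWt_cons_cons, rlWt_cons_cons]
      have hsym : rWt c z e = rWt c e z := rWt_symm c z e
      linear_combination t1 + t2 + t3 + ihres + hsym -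
        (rWt c b z + rWt c d z + rWt c a z + rWt c z e) * zmod2_two

lemma walk_wt (G' : SimpleGraph α) (h0 : ∀ u v, G'.Adj u v → rWt c u v = 0) :
    ∀ {u v : α} (p : G'.Walk u v), rlWt c p.support = 0 := by
  intro u v p
  induction p with
  | nil => rfl
  | @cons u w v h p ih =>
    rw [SimpleGraph.Walk.support_cons, p.support_eq_cons, rlWt_cons_cons,
      ← p.support_eq_cons, ih, add_zero]
    exact h0 _ _ h

end RainbowAux



/-- Rainbow triangles in three-coloured graphs: if deleting the edges between any two
fixed colours leaves the graph connected, and the total domination number of the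
complement is at least `5`, then there is a triangle with all three colours. -/
theorem rainbow_triangle {V : Type*} [Fintype V] [DecidableEq V]
    (G : SimpleGraph V)
    (c : V → Fin 3) (hc : Function.Surjective c)
    (hconn : ∀ i j : Fin 3, i ≠ j →
      (SimpleGraph.fromRel (fun u v => G.Adj u v ∧
        ¬((c u = i ∧ c v = j) ∨ (c u = j ∧ c v = i)))).Connected)
    (hdom : ∀ D : Finset V, (∀ v : V, ∃ u ∈ D, Gᶜ.Adj v u) → 5 ≤ D.card) :
    ∃ u v w : V, G.Adj u v ∧ G.Adj v w ∧ G.Adj u w ∧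
      c u ≠ c v ∧ c v ≠ c w ∧ c u ≠ c w := by
  by_contra hcon
  push_neg at hcon
  -- no rainbow triangle
  have nr : ∀ u v w : V, G.Adj u v → G.Adj v w → G.Adj u w →
      (c u = c v ∨ c v = c w ∨ c u = c w) := by
    intro u v w h1 h2 h3
    by_cases e1 : c u = c v
    · exact Or.inl e1
    by_cases e2 : c v = c w
    · exact Or.inr (Or.inl e2)
    exact Or.inr (Or.inr (hcon u v w h1 h2 h3 e1 e2))
  -- every four vertices have a common closed neighbour
  have hz : ∀ a b d e : V, ∃ z, (a = z ∨ G.Adj a z) ∧ (b = z ∨ G.Adj b z) ∧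
      (d = z ∨ G.Adj d z) ∧ (e = z ∨ G.Adj e z) := by
    intro a b d e
    by_contra hno
    push_neg at hno
    have hcard : ({a, b, d, e} : Finset V).card ≤ 4 := by
      apply le_trans (Finset.card_insert_le _ _)
      have := Finset.card_insert_le b ({d, e} : Finset V)
      have := Finset.card_insert_le d ({e} : Finset V)
      simp only [Finset.card_singleton] at *
      omega
    have h5 := hdom {a, b, d, e} ?_
    · omega
    intro v
    have key : ∀ x : V, ¬(x = v ∨ G.Adj x v) → ∃ u ∈ ({a, b, d, e} : Finset V) ∪ {x}, Gᶜ.Adj v u := by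
      intro x hx
      push_neg at hx
      exact ⟨x, by simp, by
        rw [SimpleGraph.compl_adj]
        exact ⟨fun h => hx.1 h.symm, fun h => hx.2 (G.adj_symm h)⟩⟩
    by_cases ha : a = v ∨ G.Adj a v
    · by_cases hb : b = v ∨ G.Adj b v
      · by_cases hd : d = v ∨ G.Adj d v
        · have he := hno v ha hb hd
          exact ⟨e, by simp, by
            rw [SimpleGraph.compl_adj]
            exact ⟨fun h => he.1 h.symm, fun h => he.2 (G.adj_symm h)⟩⟩
        · push_neg at hd
          exact ⟨d, by simp, by
            rw [SimpleGraph.compl_adj]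
            exact ⟨fun h => hd.1 h.symm, fun h => hd.2 (G.adj_symm h)⟩⟩
      · push_neg at hb
        exact ⟨b, by simp, by
          rw [SimpleGraph.compl_adj]
          exact ⟨fun h => hb.1 h.symm, fun h => hb.2 (G.adj_symm h)⟩⟩
    · push_neg at ha
      exact ⟨a, by simp, by
        rw [SimpleGraph.compl_adj]
        exact ⟨fun h => ha.1 h.symm, fun h => ha.2 (G.adj_symm h)⟩⟩
  -- there is an edge between colours 0 and 1
  have fin3cases : ∀ x : Fin 3, x = 0 ∨ x = 1 ∨ x = 2 := by decide
  have hedge : ∃ x y : V, G.Adj x y ∧ c x = 0 ∧ c y = 1 := by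
    obtain ⟨a, ha⟩ := hc 0
    obtain ⟨b, hb⟩ := hc 1
    have h02 := hconn 0 2 (by decide)
    obtain ⟨p⟩ := h02.preconnected a b
    clear hcon hdom hz
    induction p with
    | nil => rw [ha] at hb; exact absurd hb (by decide)
    | @cons u w v h p ih =>
      rcases fin3cases (c w) with hw | hw | hw
      · exact ih hw hb
      · rw [SimpleGraph.fromRel_adj] at h
        rcases h.2 with ⟨hadj, _⟩ | ⟨hadj, _⟩
        · exact ⟨u, w, hadj, ha, hw⟩
        · exact ⟨u, w, G.adj_symm hadj, ha, hw⟩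
      · rw [SimpleGraph.fromRel_adj] at h
        rcases h.2 with ⟨_, hpat⟩ | ⟨_, hpat⟩
        · exact absurd (Or.inl ⟨ha, hw⟩) hpat
        · exact absurd (Or.inr ⟨hw, ha⟩) hpat
  obtain ⟨x, y, hxy, hx0, hy1⟩ := hedge
  set G01 := SimpleGraph.fromRel (fun u v => G.Adj u v ∧
      ¬((c u = (0 : Fin 3) ∧ c v = 1) ∨ (c u = 1 ∧ c v = 0))) with hG01
  have h01 := hconn 0 1 (by decide)
  obtain ⟨p⟩ := h01.preconnected y x
  -- all edges of G01 have weight 0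
  have h0 : ∀ u v : V, G01.Adj u v → rWt c u v = 0 := by
    intro u v h
    rw [hG01, SimpleGraph.fromRel_adj] at h
    rw [rWt, rWtc, if_neg]
    rcases h.2 with ⟨_, hpat⟩ | ⟨_, hpat⟩
    · exact hpat
    · intro hp; exact hpat (hp.elim (fun ⟨h1, h2⟩ => Or.inr ⟨h2, h1⟩)
        (fun ⟨h1, h2⟩ => Or.inl ⟨h2, h1⟩))
  have hsupp0 : rlWt c p.support = 0 := walk_wt c G01 h0 p
  -- G01 edges are G edges
  have hle : ∀ u v : V, G01.Adj u v → G.Adj u v := by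
    intro u v h
    rw [hG01, SimpleGraph.fromRel_adj] at h
    rcases h.2 with ⟨hadj, _⟩ | ⟨hadj, _⟩
    · exact hadj
    · exact G.adj_symm hadj
  -- the closed pseudo-walk x :: p.support
  have hch : List.Chain (fun u v => u = v ∨ G.Adj u v) x p.support := by
    rw [p.support_eq_cons]
    refine List.Chain.cons (Or.inr hxy) ?_
    have := p.isChain_adj_support
    rw [p.support_eq_cons] at this
    exact List.IsChain.imp (fun u v h => Or.inr (hle u v h)) this
  have hcl : (x :: p.support).getLast? = some x := by
    rw [p.support_eq_cons, List.getLast?_cons_cons, ← p.support_eq_cons,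
      List.getLast?_eq_getLast_of_ne_nil p.support_ne_nil, p.getLast_support]
  have h0' := closed_wt G c nr hz p.support.length x p.support le_rfl hch hcl
  rw [p.support_eq_cons, rlWt_cons_cons, ← p.support_eq_cons, hsupp0, add_zero] at h0'
  rw [rWt, hx0, hy1] at h0'
  exact absurd h0' (by decide)
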